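/- Let 0 < λ₂ < λ₁ < 1, φ > 0 and p ∈ (0,1), and let Y be a random variable on (0,1) with density f_FB(y) = p·f_B(y; λ₁, φ) + (1−p)·f_B(y; λ₂, φ) with respect to Lebesgue measure. Set w̃ = λ₁ − λ₂ and θ = λ₂ + p·w̃. Then Var[Y] = (θ(1−θ) + p(1−p)·w̃²·φ)/(φ + 1). -/

import Mathlib

open MeasureTheory

open Set
open scoped NNReal ENNReal

/-- Density of the Beta distribution in mean-precision parametrization: mean `μ ∈ (0,1)` and
precision `φ > 0`, i.e. shape parameters `μφ` and `(1−μ)φ`. -/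
noncomputable def betaDensity (μ φ y : ℝ) : ℝ :=
  if 0 < y ∧ y < 1 then
    Real.Gamma φ / (Real.Gamma (μ * φ) * Real.Gamma ((1 - μ) * φ))
      * y ^ (μ * φ - 1) * (1 - y) ^ ((1 - μ) * φ - 1)
  else 0

lemma cplx_eq_real {a b : ℝ} (x : ℝ) (hx : x ∈ Set.uIcc (0:ℝ) 1) :
    (x : ℂ) ^ ((a:ℂ) - 1) * (1 - (x : ℂ)) ^ ((b:ℂ) - 1)
      = ((x ^ (a - 1) * (1 - x) ^ (b - 1) : ℝ) : ℂ) := by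
  rw [Set.uIcc_of_le (by norm_num : (0:ℝ) ≤ 1)] at hx
  have e1 : ((a:ℂ) - 1) = ((a - 1 : ℝ) : ℂ) := by push_cast; ring
  have e2 : ((b:ℂ) - 1) = ((b - 1 : ℝ) : ℂ) := by push_cast; ring
  have e3 : (1 - (x:ℂ)) = ((1 - x : ℝ) : ℂ) := by push_cast; ring
  rw [e1, e2, e3, ← Complex.ofReal_cpow hx.1, ← Complex.ofReal_cpow (by linarith [hx.2]),
    ← Complex.ofReal_mul]

lemma real_beta_integrable {a b : ℝ} (ha : 0 < a) (hb : 0 < b) :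
    IntervalIntegrable (fun x => x ^ (a - 1) * (1 - x) ^ (b - 1)) volume 0 1 := by
  have h := Complex.betaIntegral_convergent (u := a) (v := b) (by simpa) (by simpa)
  rw [intervalIntegrable_iff] at h ⊢
  have h2 : IntegrableOn (fun x : ℝ => ((x ^ (a - 1) * (1 - x) ^ (b - 1) : ℝ) : ℂ))
      (Set.uIoc (0:ℝ) 1) volume := by
    refine h.congr_fun (fun x hx => ?_) measurableSet_uIoc
    exact cplx_eq_real x (uIoc_subset_uIcc hx)
  simpa [IntegrableOn] using h2.re

lemma real_beta {a b : ℝ} (ha : 0 < a) (hb : 0 < b) :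
    ∫ x in (0:ℝ)..1, x ^ (a - 1) * (1 - x) ^ (b - 1)
      = Real.Gamma a * Real.Gamma b / Real.Gamma (a + b) := by
  have h := Complex.Gamma_mul_Gamma_eq_betaIntegral (s := a) (t := b) (by simpa) (by simpa)
  have hci : Complex.betaIntegral a b
      = ((∫ x in (0:ℝ)..1, x ^ (a - 1) * (1 - x) ^ (b - 1) : ℝ) : ℂ) := by
    rw [Complex.betaIntegral, intervalIntegral.integral_congr cplx_eq_real]
    exact intervalIntegral.integral_ofReal
  have hab : ((a:ℂ) + (b:ℂ)) = ((a + b : ℝ) : ℂ) := by push_cast; ring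
  rw [hci, hab, Complex.Gamma_ofReal, Complex.Gamma_ofReal, Complex.Gamma_ofReal] at h
  have h' : Real.Gamma a * Real.Gamma b
      = Real.Gamma (a + b) * ∫ x in (0:ℝ)..1, x ^ (a - 1) * (1 - x) ^ (b - 1) := by
    exact_mod_cast h
  have hΓ : Real.Gamma (a + b) ≠ 0 := (Real.Gamma_pos_of_pos (by linarith)).ne'
  field_simp
  linarith [h']

lemma betaDensity_eq_indicator (μ φ : ℝ) :
    betaDensity μ φ = (Set.Ioo (0:ℝ) 1).indicator
      (fun y => Real.Gamma φ / (Real.Gamma (μ * φ) * Real.Gamma ((1 - μ) * φ))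
        * (y ^ (μ * φ - 1) * (1 - y) ^ ((1 - μ) * φ - 1))) := by
  funext y
  simp only [betaDensity, Set.indicator, Set.mem_Ioo, mul_assoc]

lemma betaDensity_integrable {μ φ : ℝ} (hμ0 : 0 < μ) (hμ1 : μ < 1) (hφ : 0 < φ) :
    Integrable (betaDensity μ φ) := by
  have ha : 0 < μ * φ := by positivity
  have hb : 0 < (1 - μ) * φ := by nlinarith
  rw [betaDensity_eq_indicator]
  rw [integrable_indicator_iff measurableSet_Ioo]
  have h := ((real_beta_integrable ha hb).const_mul
    (Real.Gamma φ / (Real.Gamma (μ * φ) * Real.Gamma ((1 - μ) * φ))))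
  rw [intervalIntegrable_iff_integrableOn_Ioc_of_le (by norm_num)] at h
  exact h.mono_set Set.Ioo_subset_Ioc_self

lemma betaDensity_integral {μ φ : ℝ} (hμ0 : 0 < μ) (hμ1 : μ < 1) (hφ : 0 < φ) :
    ∫ y, betaDensity μ φ y = 1 := by
  have ha : 0 < μ * φ := by positivity
  have hb : 0 < (1 - μ) * φ := by nlinarith
  rw [betaDensity_eq_indicator, integral_indicator measurableSet_Ioo,
    ← integral_Ioc_eq_integral_Ioo,
    ← intervalIntegral.integral_of_le (by norm_num : (0:ℝ) ≤ 1),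
    intervalIntegral.integral_const_mul, real_beta ha hb]
  have hab : μ * φ + (1 - μ) * φ = φ := by ring
  rw [hab]
  have h1 : Real.Gamma φ ≠ 0 := (Real.Gamma_pos_of_pos hφ).ne'
  have h2 : Real.Gamma (μ * φ) ≠ 0 := (Real.Gamma_pos_of_pos ha).ne'
  have h3 : Real.Gamma ((1 - μ) * φ) ≠ 0 := (Real.Gamma_pos_of_pos hb).ne'
  field_simp
  exact div_self (by rwa [mul_comm] at h3)

lemma betaDensity_shift {μ φ : ℝ} (hμ0 : 0 < μ) (hμ1 : μ < 1) (hφ : 0 < φ) (k : ℕ) :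
    (fun y => y ^ k * betaDensity μ φ y)
      = fun y => (Real.Gamma φ * Real.Gamma (μ * φ + k)
            / (Real.Gamma (μ * φ) * Real.Gamma (φ + k)))
          * betaDensity ((μ * φ + k) / (φ + k)) (φ + k) y := by
  have ha : 0 < μ * φ := by positivity
  have hb : 0 < (1 - μ) * φ := by nlinarith
  have hφk : (0:ℝ) < φ + k := by positivity
  have e1 : (μ * φ + k) / (φ + k) * (φ + k) = μ * φ + k := div_mul_cancel₀ _ hφk.ne'
  have e2 : (1 - (μ * φ + k) / (φ + k)) * (φ + k) = (1 - μ) * φ := by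
    field_simp; ring
  funext y
  simp only [betaDensity, e1, e2]
  by_cases hy : 0 < y ∧ y < 1
  · simp only [if_pos hy]
    have hyk : (y : ℝ) ^ k = y ^ (k : ℝ) := (Real.rpow_natCast y k).symm
    have hpow : y ^ (k:ℕ) * y ^ (μ * φ - 1) = y ^ (μ * φ + k - 1) := by
      rw [hyk, ← Real.rpow_add hy.1]
      ring_nf
    have h1 : Real.Gamma φ ≠ 0 := (Real.Gamma_pos_of_pos hφ).ne'
    have h2 : Real.Gamma (μ * φ) ≠ 0 := (Real.Gamma_pos_of_pos ha).ne'
    have h3 : Real.Gamma ((1 - μ) * φ) ≠ 0 := (Real.Gamma_pos_of_pos hb).ne'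
    have h4 : Real.Gamma (μ * φ + k) ≠ 0 :=
      (Real.Gamma_pos_of_pos (by positivity)).ne'
    have h5 : Real.Gamma (φ + k) ≠ 0 := (Real.Gamma_pos_of_pos hφk).ne'
    field_simp
    rw [← hpow]
    ring
  · simp [if_neg hy]

lemma shift_params {μ φ : ℝ} (hμ0 : 0 < μ) (hμ1 : μ < 1) (hφ : 0 < φ) (k : ℕ) :
    0 < (μ * φ + k) / (φ + k) ∧ (μ * φ + k) / (φ + k) < 1 ∧ (0:ℝ) < φ + k := by
  have hφk : (0:ℝ) < φ + k := by positivity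
  refine ⟨by positivity, ?_, hφk⟩
  rw [div_lt_one hφk]
  nlinarith

lemma betaDensity_moment_integrable {μ φ : ℝ} (hμ0 : 0 < μ) (hμ1 : μ < 1) (hφ : 0 < φ)
    (k : ℕ) : Integrable (fun y => y ^ k * betaDensity μ φ y) := by
  obtain ⟨p1, p2, p3⟩ := shift_params hμ0 hμ1 hφ k
  rw [betaDensity_shift hμ0 hμ1 hφ k]
  exact (betaDensity_integrable p1 p2 p3).const_mul _

lemma betaDensity_moment {μ φ : ℝ} (hμ0 : 0 < μ) (hμ1 : μ < 1) (hφ : 0 < φ) (k : ℕ) :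
    ∫ y, y ^ k * betaDensity μ φ y
      = Real.Gamma φ * Real.Gamma (μ * φ + k) / (Real.Gamma (μ * φ) * Real.Gamma (φ + k)) := by
  obtain ⟨p1, p2, p3⟩ := shift_params hμ0 hμ1 hφ k
  rw [betaDensity_shift hμ0 hμ1 hφ k, integral_const_mul, betaDensity_integral p1 p2 p3,
    mul_one]

lemma betaDensity_mean {μ φ : ℝ} (hμ0 : 0 < μ) (hμ1 : μ < 1) (hφ : 0 < φ) :
    ∫ y, y * betaDensity μ φ y = μ := by
  have h := betaDensity_moment hμ0 hμ1 hφ 1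
  simp only [pow_one, Nat.cast_one] at h
  rw [h, Real.Gamma_add_one (by positivity : (0:ℝ) < μ * φ).ne',
    Real.Gamma_add_one hφ.ne']
  have h2 : Real.Gamma (μ * φ) ≠ 0 := (Real.Gamma_pos_of_pos (by positivity)).ne'
  have h1 : Real.Gamma φ ≠ 0 := (Real.Gamma_pos_of_pos hφ).ne'
  field_simp

lemma betaDensity_sq {μ φ : ℝ} (hμ0 : 0 < μ) (hμ1 : μ < 1) (hφ : 0 < φ) :
    ∫ y, y ^ 2 * betaDensity μ φ y = μ * (μ * φ + 1) / (φ + 1) := by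
  have h := betaDensity_moment hμ0 hμ1 hφ 2
  simp only [Nat.cast_ofNat] at h
  have e1 : μ * φ + 2 = (μ * φ + 1) + 1 := by ring
  have e2 : φ + 2 = (φ + 1) + 1 := by ring
  rw [h, e1, e2, Real.Gamma_add_one (by positivity : (0:ℝ) < μ * φ + 1).ne',
    Real.Gamma_add_one (by positivity : (0:ℝ) < φ + 1).ne',
    Real.Gamma_add_one (by positivity : (0:ℝ) < μ * φ).ne',
    Real.Gamma_add_one hφ.ne']
  have h2 : Real.Gamma (μ * φ) ≠ 0 := (Real.Gamma_pos_of_pos (by positivity)).ne'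
  have h1 : Real.Gamma φ ≠ 0 := (Real.Gamma_pos_of_pos hφ).ne'
  have h3 : φ + 1 ≠ 0 := by positivity
  field_simp

lemma betaDensity_key {μ φ : ℝ} (θ : ℝ) (hμ0 : 0 < μ) (hμ1 : μ < 1) (hφ : 0 < φ) :
    Integrable (fun y => (y - θ) ^ 2 * betaDensity μ φ y) ∧
    ∫ y, (y - θ) ^ 2 * betaDensity μ φ y
      = μ * (μ * φ + 1) / (φ + 1) - 2 * θ * μ + θ ^ 2 := by
  have I0 := betaDensity_moment_integrable hμ0 hμ1 hφ 0
  have I1 := betaDensity_moment_integrable hμ0 hμ1 hφ 1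
  have I2 := betaDensity_moment_integrable hμ0 hμ1 hφ 2
  have hfun : (fun y => (y - θ) ^ 2 * betaDensity μ φ y)
      = fun y => y ^ 2 * betaDensity μ φ y
          + ((-2 * θ) * (y ^ 1 * betaDensity μ φ y) + θ ^ 2 * (y ^ 0 * betaDensity μ φ y)) := by
    funext y; ring
  constructor
  · rw [hfun]
    exact I2.add ((I1.const_mul _).add (I0.const_mul _))
  · have hc1 : Integrable (fun y => (-2 * θ) * (y ^ 1 * betaDensity μ φ y)) :=
      I1.const_mul _
    have hc0 : Integrable (fun y => θ ^ 2 * (y ^ 0 * betaDensity μ φ y)) :=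
      I0.const_mul _
    have hsum : Integrable (fun y => (-2 * θ) * (y ^ 1 * betaDensity μ φ y)
        + θ ^ 2 * (y ^ 0 * betaDensity μ φ y)) := hc1.add hc0
    rw [hfun, integral_add I2 hsum, integral_add hc1 hc0,
      integral_const_mul, integral_const_mul, betaDensity_sq hμ0 hμ1 hφ]
    have hm : ∫ y, y ^ 1 * betaDensity μ φ y = μ := by
      simpa [pow_one] using betaDensity_mean hμ0 hμ1 hφ
    have h0 : ∫ y, y ^ 0 * betaDensity μ φ y = 1 := by
      simpa using betaDensity_integral hμ0 hμ1 hφ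
    rw [hm, h0]
    ring

lemma betaDensity_measurable (μ φ : ℝ) : Measurable (betaDensity μ φ) := by
  rw [betaDensity_eq_indicator]
  have hcongr : (Set.Ioo (0:ℝ) 1).indicator
      (fun y => Real.Gamma φ / (Real.Gamma (μ * φ) * Real.Gamma ((1 - μ) * φ))
        * (y ^ (μ * φ - 1) * (1 - y) ^ ((1 - μ) * φ - 1)))
    = (Set.Ioo (0:ℝ) 1).indicator
      (fun y => Real.Gamma φ / (Real.Gamma (μ * φ) * Real.Gamma ((1 - μ) * φ))
        * (Real.exp (Real.log y * (μ * φ - 1))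
            * Real.exp (Real.log (1 - y) * ((1 - μ) * φ - 1)))) := by
    apply Set.indicator_congr
    intro y hy
    rw [Set.mem_Ioo] at hy
    dsimp only
    rw [Real.rpow_def_of_pos hy.1, Real.rpow_def_of_pos (by linarith [hy.2] : (0:ℝ) < 1 - y)]
  rw [hcongr]
  apply Measurable.indicator _ measurableSet_Ioo
  exact measurable_const.mul
    ((Real.measurable_exp.comp (Real.measurable_log.mul_const _)).mul
      (Real.measurable_exp.comp
        ((Real.measurable_log.comp (measurable_const.sub measurable_id)).mul_const _)))

lemma betaDensity_nonneg {μ φ : ℝ} (hμ0 : 0 < μ) (hμ1 : μ < 1) (hφ : 0 < φ) (y : ℝ) :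
    0 ≤ betaDensity μ φ y := by
  unfold betaDensity
  split_ifs with hy
  · have h1 : 0 < Real.Gamma φ := Real.Gamma_pos_of_pos hφ
    have h2 : 0 < Real.Gamma (μ * φ) := Real.Gamma_pos_of_pos (by positivity)
    have h3 : 0 < Real.Gamma ((1 - μ) * φ) := Real.Gamma_pos_of_pos (by nlinarith)
    have hy1 : (0:ℝ) ≤ y := hy.1.le
    have hy2 : (0:ℝ) ≤ 1 - y := by linarith [hy.2]
    positivity
  · exact le_refl _

/-- A random variable on `(0,1)` with Flexible Beta density
`p·f_B(·; λ₁, φ) + (1−p)·f_B(·; λ₂, φ)`, with `w̃ = λ₁ − λ₂` and mean `θ = λ₂ + p·w̃`, has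
variance `(θ(1−θ) + p(1−p)·w̃²·φ)/(φ + 1)`. -/
theorem flexible_beta_variance (lam1 lam2 φ p : ℝ) (h2 : 0 < lam2) (h21 : lam2 < lam1)
    (h1 : lam1 < 1) (hφ : 0 < φ) (hp : 0 < p) (hp1 : p < 1)
    (P : Measure ℝ)
    (hP : P = volume.withDensity
      (fun y => ENNReal.ofReal (p * betaDensity lam1 φ y + (1 - p) * betaDensity lam2 φ y)))
    (w θ : ℝ) (hw : w = lam1 - lam2) (hθ : θ = lam2 + p * w) :
    (∫ y, (y - θ) ^ 2 ∂P) = (θ * (1 - θ) + p * (1 - p) * w ^ 2 * φ) / (φ + 1) := by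
  set d : ℝ → ℝ := fun y => p * betaDensity lam1 φ y + (1 - p) * betaDensity lam2 φ y with hd
  have hlam10 : 0 < lam1 := lt_trans h2 h21
  have hlam21 : lam2 < 1 := lt_trans h21 h1
  have hd_nonneg : ∀ y, 0 ≤ d y := fun y => by
    have hb1 := betaDensity_nonneg hlam10 h1 hφ y
    have hb2 := betaDensity_nonneg h2 hlam21 hφ y
    have hp' : (0:ℝ) ≤ 1 - p := by linarith
    have hdy : d y = p * betaDensity lam1 φ y + (1 - p) * betaDensity lam2 φ y := rfl
    rw [hdy]
    positivity
  have hd_meas : Measurable d :=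
    ((betaDensity_measurable lam1 φ).const_mul p).add
      ((betaDensity_measurable lam2 φ).const_mul (1 - p))
  have key1 := betaDensity_key θ hlam10 h1 hφ
  have key2 := betaDensity_key θ h2 hlam21 hφ
  have step1 : (∫ y, (y - θ) ^ 2 ∂P) = ∫ y, d y * (y - θ) ^ 2 := by
    rw [hP]
    have heq : (fun y => ENNReal.ofReal (d y))
        = fun y => ((Real.toNNReal (d y) : NNReal) : ENNReal) := rfl
    rw [heq, integral_withDensity_eq_integral_smul hd_meas.real_toNNReal]
    refine integral_congr_ae (Filter.Eventually.of_forall fun y => ?_)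
    simp [NNReal.smul_def, Real.coe_toNNReal _ (hd_nonneg y)]
  have hfun : (fun y => d y * (y - θ) ^ 2)
      = fun y => p * ((y - θ) ^ 2 * betaDensity lam1 φ y)
          + (1 - p) * ((y - θ) ^ 2 * betaDensity lam2 φ y) := by
    funext y; simp only [hd]; ring
  have hI1 := key1.1.const_mul p
  have hI2 := key2.1.const_mul (1 - p)
  rw [step1, hfun, integral_add hI1 hI2, integral_const_mul, integral_const_mul,
    key1.2, key2.2]
  subst hθ hw
  have hφ1 : φ + 1 ≠ 0 := by positivity
  field_simp
  ring
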